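/- (Identity of h.) Let (a_1,…,a_n) be a generalized arithmetic sequence with n ≥ 7, and let m with 4 ≤ m ≤ n−3 be such that a_m > a_{m−1} and a_m > a_{m+1}. Then h(a_1,…,a_{m−1},a_{m+1},…,a_n) = h(a_1,…,a_n), i.e. deleting the local maximum a_m does not change the value of h. -/

import Mathlib

/-- A generalized arithmetic sequence `(a 1, …, a n)` of positive reals:
each interior term divides the sum of its two neighbors. -/
def IsGAS (n : ℕ) (a : ℕ → ℝ) : Prop :=
  (∀ i, 1 ≤ i → i ≤ n → 0 < a i) ∧
  (∀ i, 2 ≤ i → i + 1 ≤ n → ∃ c : ℕ+, a (i - 1) + a (i + 1) = (c : ℝ) * a i)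

/-- `h` of a sequence `(a 1, …, a n)` (meaningful for `n ≥ 4`). -/
noncomputable def hFun (n : ℕ) (a : ℕ → ℝ) : ℝ :=
  ∑ i ∈ Finset.Icc 2 (n - 2),
    (((a i + a (i + 2)) / a (i + 1) + (a (i - 1) + a (i + 1)) / a i) / 2 - 3)

/-- Identity of `h`: deleting a local maximum `a m` with `4 ≤ m ≤ n − 3` from a
generalized arithmetic sequence of length `n ≥ 7` does not change the value of `h`. -/
theorem h_identity (n : ℕ) (hn : 7 ≤ n) (a : ℕ → ℝ) (hgas : IsGAS n a)
    (m : ℕ) (hm1 : 4 ≤ m) (hm2 : m ≤ n - 3)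
    (hmax₁ : a (m - 1) < a m) (hmax₂ : a (m + 1) < a m) :
    hFun (n - 1) (fun i => if i < m then a i else a (i + 1)) = hFun n a := by
  obtain ⟨hpos, hdiv⟩ := hgas
  obtain ⟨k, rfl⟩ : ∃ k, m = k + 4 := ⟨m - 4, by omega⟩
  rw [show k + 4 - 1 = k + 3 by omega] at hmax₁
  -- the key relation: the local max equals the sum of its neighbors
  have hkey : a (k + 3) + a (k + 5) = a (k + 4) := by
    obtain ⟨c, hc⟩ := hdiv (k + 4) (by omega) (by omega)
    rw [show k + 4 - 1 = k + 3 by omega] at hc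
    have hpos4 : 0 < a (k + 4) := hpos _ (by omega) (by omega)
    have hc2 : (c : ℕ) < 2 := by
      by_contra h
      push_neg at h
      have h2 : (2 : ℝ) ≤ (c : ℝ) := by exact_mod_cast h
      nlinarith [hc, hmax₁, hmax₂]
    have hc1 : (c : ℕ) = 1 := Nat.le_antisymm (Nat.lt_succ_iff.mp hc2) c.pos
    have : (c : ℝ) = 1 := by exact_mod_cast hc1
    rw [this] at hc; linarith [hc]
  -- positivity of the relevant entries
  have p1 : 0 < a (k + 1) := hpos _ (by omega) (by omega)
  have p2 : 0 < a (k + 2) := hpos _ (by omega) (by omega)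
  have p3 : 0 < a (k + 3) := hpos _ (by omega) (by omega)
  have p5 : 0 < a (k + 5) := hpos _ (by omega) (by omega)
  have p6 : 0 < a (k + 6) := hpos _ (by omega) (by omega)
  have p7 : 0 < a (k + 7) := hpos _ (by omega) (by omega)
  have p4 : 0 < a (k + 4) := hpos _ (by omega) (by omega)
  set b : ℕ → ℝ := fun i => if i < k + 4 then a i else a (i + 1) with hb
  show hFun (n - 1) b = hFun n a
  unfold hFun
  rw [show n - 1 - 2 = n - 3 by omega]
  rw [show Finset.Icc 2 (n - 3) = Finset.Ioc 1 (n - 3) by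
        rw [← Finset.Icc_add_one_left_eq_Ioc]; rfl,
      show Finset.Icc 2 (n - 2) = Finset.Ioc 1 (n - 2) by
        rw [← Finset.Icc_add_one_left_eq_Ioc]; rfl]
  rw [← Finset.sum_Ioc_consecutive _ (show (1:ℕ) ≤ k + 4 by omega)
        (show k + 4 ≤ n - 3 by omega),
      ← Finset.sum_Ioc_consecutive _ (show (1:ℕ) ≤ k + 1 by omega)
        (show k + 1 ≤ k + 4 by omega)]
  rw [← Finset.sum_Ioc_consecutive _ (show (1:ℕ) ≤ k + 5 by omega)
        (show k + 5 ≤ n - 2 by omega),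
      ← Finset.sum_Ioc_consecutive _ (show (1:ℕ) ≤ k + 1 by omega)
        (show k + 1 ≤ k + 5 by omega)]
  -- head sums agree termwise
  have head : ∑ i ∈ Finset.Ioc 1 (k + 1),
        (((b i + b (i + 2)) / b (i + 1) + (b (i - 1) + b (i + 1)) / b i) / 2 - 3)
      = ∑ i ∈ Finset.Ioc 1 (k + 1),
        (((a i + a (i + 2)) / a (i + 1) + (a (i - 1) + a (i + 1)) / a i) / 2 - 3) := by
    apply Finset.sum_congr rfl
    intro i hi
    simp only [Finset.mem_Ioc] at hi
    simp only [hb, if_pos (show i < k + 4 by omega), if_pos (show i + 2 < k + 4 by omega),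
      if_pos (show i + 1 < k + 4 by omega), if_pos (show i - 1 < k + 4 by omega)]
  -- tail sums agree after reindexing
  have tail : ∑ i ∈ Finset.Ioc (k + 4) (n - 3),
        (((b i + b (i + 2)) / b (i + 1) + (b (i - 1) + b (i + 1)) / b i) / 2 - 3)
      = ∑ i ∈ Finset.Ioc (k + 5) (n - 2),
        (((a i + a (i + 2)) / a (i + 1) + (a (i - 1) + a (i + 1)) / a i) / 2 - 3) := by
    apply Finset.sum_nbij' (fun i => i + 1) (fun j => j - 1)
    · intro i hi; simp only [Finset.mem_Ioc] at hi ⊢; omega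
    · intro j hj; simp only [Finset.mem_Ioc] at hj ⊢; omega
    · intro i hi; omega
    · intro j hj; simp only [Finset.mem_Ioc] at hj; omega
    · intro i hi
      simp only [Finset.mem_Ioc] at hi
      simp only [hb, if_neg (show ¬ i < k + 4 by omega),
        if_neg (show ¬ i + 2 < k + 4 by omega), if_neg (show ¬ i + 1 < k + 4 by omega),
        if_neg (show ¬ i - 1 < k + 4 by omega)]
      rw [show i - 1 + 1 = i by omega, show i + 1 - 1 = i by omega]
  have mid : ∑ i ∈ Finset.Ioc (k + 1) (k + 4),
        (((b i + b (i + 2)) / b (i + 1) + (b (i - 1) + b (i + 1)) / b i) / 2 - 3)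
      = ∑ i ∈ Finset.Ioc (k + 1) (k + 5),
        (((a i + a (i + 2)) / a (i + 1) + (a (i - 1) + a (i + 1)) / a i) / 2 - 3) := by
    have e1 : Finset.Ioc (k + 1) (k + 4) = {k + 2, k + 3, k + 4} := by
      ext x; simp only [Finset.mem_Ioc, Finset.mem_insert, Finset.mem_singleton]; omega
    have e2 : Finset.Ioc (k + 1) (k + 5) = {k + 2, k + 3, k + 4, k + 5} := by
      ext x; simp only [Finset.mem_Ioc, Finset.mem_insert, Finset.mem_singleton]; omega
    rw [e1, e2]
    rw [Finset.sum_insert (by simp only [Finset.mem_insert, Finset.mem_singleton]; omega),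
        Finset.sum_pair (by omega : k + 3 ≠ k + 4)]
    rw [Finset.sum_insert (by simp only [Finset.mem_insert, Finset.mem_singleton]; omega),
        Finset.sum_insert (by simp only [Finset.mem_insert, Finset.mem_singleton]; omega),
        Finset.sum_pair (by omega : k + 4 ≠ k + 5)]
    simp only [hb, show k + 2 - 1 = k + 1 by omega, show k + 3 - 1 = k + 2 by omega,
        show k + 4 - 1 = k + 3 by omega, show k + 5 - 1 = k + 4 by omega,
        show k + 2 + 2 = k + 4 by omega, show k + 3 + 2 = k + 5 by omega,
        show k + 4 + 2 = k + 6 by omega, show k + 5 + 2 = k + 7 by omega,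
        show k + 2 + 1 = k + 3 by omega, show k + 3 + 1 = k + 4 by omega,
        show k + 4 + 1 = k + 5 by omega, show k + 5 + 1 = k + 6 by omega,
        show k + 6 + 1 = k + 7 by omega]
    rw [if_pos (show k + 2 < k + 4 by omega), if_pos (show k + 3 < k + 4 by omega),
      if_pos (show k + 1 < k + 4 by omega),
      if_neg (show ¬ k + 4 < k + 4 by omega), if_neg (show ¬ k + 5 < k + 4 by omega),
      if_neg (show ¬ k + 6 < k + 4 by omega)]
    rw [← hkey]
    field_simp
    ring
  rw [head, tail, mid]
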